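/- (ISS Lyapunov theorem with respect to two outputs, asymptotic case; Theorem 2 of the paper.) Let Ξ ⊆ ℝ^{n_ξ} be closed, let Ω_c assign to each ξ ∈ Ξ a set Ω_c(ξ) ⊆ ℝ^{n_ω} with 0 ∈ Ω_c(ξ), and let F_c : Ξ × ℝ^{n_ω} → ℝ^{n_ξ} satisfy F_c(ξ,ω) ∈ Ξ whenever ξ ∈ Ξ and ω ∈ Ω_c(ξ). Let G1 : Ξ → ℝ^{n_1}, G2 : Ξ → ℝ^{n_2}, and let X ⊆ Ξ be closed and robustly positive invariant, i.e., ξ ∈ X and ω ∈ Ω_c(ξ) imply F_c(ξ,ω) ∈ X. Suppose there exist V : Ξ → [0,∞), functions α1, α2, α3 of class 𝒦∞, and σ of class 𝒦 such that for all ξ ∈ X and ω ∈ Ω_c(ξ): α1(‖G1(ξ)‖) ≤ V(ξ) ≤ α2(‖G2(ξ)‖) and V(F_c(ξ,ω)) ≤ V(ξ) − α3(V(ξ)) + σ(‖ω‖). Then there exist β of class 𝒦𝓛 and γ of class 𝒦 such that every trajectory with ξ(k+1) = F_c(ξ(k), ω(k)), ω(k) ∈ Ω_c(ξ(k)) for all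 k, and ξ(0) ∈ X satisfies ‖G1(ξ(k))‖ ≤ β(‖G2(ξ(0))‖, k) + γ(max_{0≤i≤k} ‖ω(i)‖) for all k ∈ ℕ. -/

import Mathlib

open scoped BigOperators

noncomputable section

abbrev Vec (n : ℕ) : Type := EuclideanSpace ℝ (Fin n)

/-- Class 𝒦 functions `[0,∞) → [0,∞)`. -/
def IsClassK (φ : ℝ → ℝ) : Prop :=
  ContinuousOn φ (Set.Ici 0) ∧ StrictMonoOn φ (Set.Ici 0) ∧ φ 0 = 0 ∧ ∀ t, 0 ≤ t → 0 ≤ φ t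

/-- Class 𝒦∞ functions. -/
def IsClassKInf (φ : ℝ → ℝ) : Prop :=
  IsClassK φ ∧ Filter.Tendsto φ Filter.atTop Filter.atTop

/-- Class 𝒦𝓛 functions. -/
def IsClassKL (β : ℝ → ℕ → ℝ) : Prop :=
  (∀ k, IsClassK fun r => β r k) ∧ (∀ r, 0 ≤ r → Antitone fun k => β r k) ∧
    ∀ r, 0 ≤ r → Filter.Tendsto (fun k => β r k) Filter.atTop (nhds 0)

lemma isClassKInf_inverse (φ : ℝ → ℝ) (h : IsClassKInf φ) :
    ∃ ψ : ℝ → ℝ, Continuous ψ ∧ StrictMono ψ ∧ ψ 0 = 0 ∧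
      (∀ x, 0 ≤ x → ψ (φ x) = x) ∧ (∀ y, 0 ≤ y → 0 ≤ ψ y ∧ φ (ψ y) = y) := by
  obtain ⟨⟨hc, hm, h0, hnn⟩, htop⟩ := h
  set φ' : ℝ → ℝ := fun x => min x 0 + φ (max x 0) with hφ'
  have hneg : ∀ x, x ≤ 0 → φ' x = x := by
    intro x hx; simp [hφ', min_eq_left hx, max_eq_right hx, h0]
  have hpos : ∀ x, 0 ≤ x → φ' x = φ x := by
    intro x hx; simp [hφ', min_eq_right hx, max_eq_left hx]
  have hcont' : Continuous φ' := by
    refine (continuous_id.min continuous_const).add ?_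
    exact hc.comp_continuous (continuous_id.max continuous_const) fun x => Set.mem_Ici.2 (le_max_right _ _)
  have hsm : StrictMono φ' := by
    intro x y hxy
    rcases le_or_gt 0 x with hx | hx
    · rw [hpos x hx, hpos y (hx.trans hxy.le)]
      exact hm hx (hx.trans hxy.le) hxy
    · rcases le_or_gt 0 y with hy | hy
      · rw [hneg x hx.le, hpos y hy]
        exact hx.trans_le (hnn y hy)
      · rw [hneg x hx.le, hneg y hy.le]; exact hxy
  have hsurj : Function.Surjective φ' := by
    refine hcont'.surjective ?_ ?_
    · refine htop.congr' ?_
      filter_upwards [Filter.eventually_ge_atTop (0:ℝ)] with x hx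
      exact (hpos x hx).symm
    · refine Filter.tendsto_id.congr' ?_
      filter_upwards [Filter.eventually_le_atBot (0:ℝ)] with x hx
      exact (hneg x hx).symm
  set e := StrictMono.orderIsoOfSurjective φ' hsm hsurj with he
  have hce : ∀ x, e x = φ' x := fun x => by
    rw [he, StrictMono.coe_orderIsoOfSurjective]
  have he0 : e.symm 0 = 0 := by
    have : e 0 = 0 := by rw [hce]; rw [hpos 0 le_rfl, h0]
    rw [OrderIso.symm_apply_eq]; exact this.symm
  refine ⟨fun y => e.symm y, e.symm.continuous, e.symm.strictMono, he0, ?_, ?_⟩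
  · intro x hx
    show e.symm (φ x) = x
    rw [← hpos x hx, ← hce]; exact e.symm_apply_apply x
  · intro y hy
    have hnn' : 0 ≤ e.symm y := by
      rw [← he0]; exact e.symm.monotone hy
    refine ⟨hnn', ?_⟩
    rw [← hpos _ hnn', ← hce]; exact e.apply_symm_apply y

/-- **ISS Lyapunov theorem with respect to two outputs, asymptotic case (Theorem 2).** -/
theorem iss_lyapunov_two_outputs_asymptotic
    {nξ nω n1 n2 : ℕ}
    (Ξ : Set (Vec nξ)) (hΞ : IsClosed Ξ)
    (Ωc : Vec nξ → Set (Vec nω)) (hΩ0 : ∀ ξ ∈ Ξ, (0 : Vec nω) ∈ Ωc ξ)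
    (Fc : Vec nξ → Vec nω → Vec nξ)
    (hFΞ : ∀ ξ ∈ Ξ, ∀ ω ∈ Ωc ξ, Fc ξ ω ∈ Ξ)
    (G1 : Vec nξ → Vec n1) (G2 : Vec nξ → Vec n2)
    (X : Set (Vec nξ)) (hXcl : IsClosed X) (hXΞ : X ⊆ Ξ)
    (hXinv : ∀ ξ ∈ X, ∀ ω ∈ Ωc ξ, Fc ξ ω ∈ X)
    (V : Vec nξ → ℝ) (hVnn : ∀ ξ ∈ Ξ, 0 ≤ V ξ)
    (α1 α2 α3 σ : ℝ → ℝ)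
    (hα1 : IsClassKInf α1) (hα2 : IsClassKInf α2) (hα3 : IsClassKInf α3) (hσ : IsClassK σ)
    (hlow : ∀ ξ ∈ X, α1 ‖G1 ξ‖ ≤ V ξ)
    (hup : ∀ ξ ∈ X, V ξ ≤ α2 ‖G2 ξ‖)
    (hdec : ∀ ξ ∈ X, ∀ ω ∈ Ωc ξ, V (Fc ξ ω) ≤ V ξ - α3 (V ξ) + σ ‖ω‖) :
    ∃ (β : ℝ → ℕ → ℝ) (γ : ℝ → ℝ), IsClassKL β ∧ IsClassK γ ∧
      ∀ (ξ : ℕ → Vec nξ) (ω : ℕ → Vec nω),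
        (∀ k, ξ (k + 1) = Fc (ξ k) (ω k)) → (∀ k, ω k ∈ Ωc (ξ k)) → ξ 0 ∈ X →
        ∀ k : ℕ, ‖G1 (ξ k)‖ ≤ β ‖G2 (ξ 0)‖ k +
          γ ((Finset.range (k + 1)).sup' Finset.nonempty_range_add_one fun i => ‖ω i‖) := by
  obtain ⟨ψ1, hψ1c, hψ1m, hψ10, hψ1l, hψ1r⟩ := isClassKInf_inverse α1 hα1
  obtain ⟨⟨hα2c, hα2m, hα20, hα2nn⟩, -⟩ := hα2
  obtain ⟨⟨hα3c, hα3m, hα30, hα3nn⟩, hα3top⟩ := hα3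
  obtain ⟨hσc, hσm, hσ0, hσnn⟩ := hσ
  -- the modified decrease function `a`
  set a : ℝ → ℝ := fun s => min (s / 2) (α3 s / 2) with ha
  have ha0 : a 0 = 0 := by simp [ha, hα30]
  have hale : ∀ s, a s ≤ α3 s / 2 := fun s => min_le_right _ _
  have hale' : ∀ s, a s ≤ s / 2 := fun s => min_le_left _ _
  have hann : ∀ s, 0 ≤ s → 0 ≤ a s := fun s hs =>
    le_min (by linarith) (by linarith [hα3nn s hs])
  have hamono : ∀ s t, 0 ≤ s → s ≤ t → a s ≤ a t := by
    intro s t hs hst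
    have h3 : α3 s ≤ α3 t :=
      hα3m.monotoneOn (Set.mem_Ici.2 hs) (Set.mem_Ici.2 (hs.trans hst)) hst
    exact le_min ((min_le_left _ _).trans (by linarith))
      ((min_le_right _ _).trans (by linarith))
  have haSM : StrictMonoOn a (Set.Ici 0) := by
    intro x hx y hy hxy
    have h3 : α3 x < α3 y := hα3m hx hy hxy
    have hx' : (0:ℝ) ≤ x := hx
    exact lt_min ((min_le_left _ _).trans_lt (by linarith))
      ((min_le_right _ _).trans_lt (by linarith))
  have haK : IsClassKInf a := by
    refine ⟨⟨?_, haSM, ha0, hann⟩, ?_⟩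
    · have hmc : ContinuousOn (fun s : ℝ => min (s / 2) (α3 s / 2)) (Set.Ici 0) := by
        exact ContinuousOn.inf ((continuous_id.div_const 2).continuousOn) (hα3c.div_const 2)
      rw [ha]; exact hmc
    · rw [Filter.tendsto_atTop]
      intro b
      have h1 := (Filter.tendsto_atTop.1
        (Filter.tendsto_id.atTop_div_const (by norm_num : (0:ℝ) < 2))) b
      have h2 := (Filter.tendsto_atTop.1
        (hα3top.atTop_div_const (by norm_num : (0:ℝ) < 2))) b
      filter_upwards [h1, h2] with x hx1 hx2
      exact le_min hx1 hx2
  obtain ⟨ψa, hψac, hψam, hψa0, hψal, hψar⟩ := isClassKInf_inverse a haK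
  -- the contraction map T
  set g : ℝ → ℝ := fun t => t - a t with hg
  set T : ℝ → ℝ := fun v => sSup (g '' Set.Icc 0 (max v 0)) with hT
  have hmemg : ∀ v : ℝ, g 0 ∈ g '' Set.Icc 0 (max v 0) := fun v =>
    Set.mem_image_of_mem _ ⟨le_rfl, le_max_right _ _⟩
  have hne : ∀ v : ℝ, (g '' Set.Icc 0 (max v 0)).Nonempty := fun v => ⟨g 0, hmemg v⟩
  have hbdd : ∀ v : ℝ, BddAbove (g '' Set.Icc 0 (max v 0)) := by
    intro v
    refine ⟨max v 0, ?_⟩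
    rintro y ⟨t, ⟨ht0, htv⟩, rfl⟩
    have := hann t ht0
    simp only [hg]
    linarith
  have hg0 : g 0 = 0 := by simp [hg, ha0]
  have hT0le : ∀ v, 0 ≤ T v := fun v => hg0 ▸ le_csSup (hbdd v) (hmemg v)
  have hTle : ∀ v, T v ≤ max v 0 := by
    intro v
    refine csSup_le (hne v) ?_
    rintro y ⟨t, ⟨ht0, htv⟩, rfl⟩
    have := hann t ht0
    simp only [hg]; linarith
  have hTle' : ∀ v, 0 ≤ v → T v ≤ v := fun v hv => (hTle v).trans_eq (max_eq_left hv)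
  have hTmono : Monotone T := by
    intro u v huv
    exact csSup_le_csSup (hbdd v) (hne u)
      (Set.image_mono (Set.Icc_subset_Icc le_rfl (max_le_max huv le_rfl)))
  have hTge : ∀ v, 0 ≤ v → v - a v ≤ T v := fun v hv =>
    le_csSup (hbdd v) (Set.mem_image_of_mem _ ⟨hv, le_max_left _ _⟩)
  have hTcontr : ∀ v, 0 ≤ v → T v ≤ v - min (v / 2) (a (v / 2)) := by
    intro v hv
    refine csSup_le (hne v) ?_
    rintro y ⟨t, ⟨ht0, htv⟩, rfl⟩
    rw [max_eq_left hv] at htv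
    rcases le_or_gt t (v / 2) with hcs | hcs
    · have h1 := hann t ht0
      have h2 := min_le_left (v / 2) (a (v / 2))
      simp only [hg]; linarith
    · have h1 : a (v / 2) ≤ a t := hamono _ _ (by linarith) hcs.le
      have h2 := min_le_right (v / 2) (a (v / 2))
      simp only [hg]; linarith
  have hTlip : ∀ u v : ℝ, u ≤ v → T v ≤ T u + (v - u) := by
    intro u v huv
    have hmvu : max v 0 - max u 0 ≤ v - u := by
      calc max v 0 - max u 0 ≤ |max v 0 - max u 0| := le_abs_self _
        _ ≤ |v - u| := abs_max_sub_max_le_abs v u 0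
        _ = v - u := abs_of_nonneg (by linarith)
    refine csSup_le (hne v) ?_
    rintro y ⟨t, ⟨ht0, htv⟩, rfl⟩
    rcases le_or_gt t (max u 0) with hcs | hcs
    · have h1 : g t ≤ T u := le_csSup (hbdd u) (Set.mem_image_of_mem _ ⟨ht0, hcs⟩)
      linarith
    · have hu0 : (0:ℝ) ≤ max u 0 := le_max_right _ _
      have h2 : g (max u 0) ≤ T u :=
        le_csSup (hbdd u) (Set.mem_image_of_mem _ ⟨hu0, le_rfl⟩)
      have h3 : a (max u 0) ≤ a t := hamono _ _ hu0 hcs.le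
      simp only [hg] at h2 ⊢
      linarith
  have hTcont : Continuous T := by
    refine LipschitzWith.continuous (LipschitzWith.of_dist_le_mul (K := 1) ?_)
    have key : ∀ x y : ℝ, x ≤ y → |T y - T x| ≤ |y - x| := by
      intro x y h
      rw [abs_of_nonneg (sub_nonneg.2 (hTmono h)), abs_of_nonneg (sub_nonneg.2 h)]
      linarith [hTlip x y h]
    intro x y
    rw [NNReal.coe_one, one_mul, Real.dist_eq, Real.dist_eq]
    rcases le_total x y with h | h
    · rw [abs_sub_comm (T x) (T y), abs_sub_comm x y]
      exact key x y h
    · exact key y x h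
  have hTfix : ∀ k, T^[k] (0:ℝ) = 0 := by
    intro k
    have hT00 : T 0 = 0 := le_antisymm (hTle' 0 le_rfl) (hT0le 0)
    exact Function.iterate_fixed hT00 k
  have hTiternn : ∀ v, 0 ≤ v → ∀ k, 0 ≤ T^[k] v := by
    intro v hv k
    cases k with
    | zero => simpa using hv
    | succ k => rw [Function.iterate_succ_apply']; exact hT0le _
  have hTiterle : ∀ v, 0 ≤ v → ∀ k, T^[k+1] v ≤ T^[k] v := by
    intro v hv k
    rw [Function.iterate_succ_apply]
    exact hTmono.iterate k (hTle' v hv)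
  have hTtend : ∀ v, 0 ≤ v →
      Filter.Tendsto (fun k => T^[k] v) Filter.atTop (nhds 0) := by
    intro v hv
    have hanti : Antitone fun k => T^[k] v := antitone_nat_of_succ_le fun k => hTiterle v hv k
    have hnn' : ∀ k, 0 ≤ T^[k] v := hTiternn v hv
    have hsmall : ∀ ε : ℝ, 0 < ε → ∃ N, T^[N] v ≤ ε := by
      intro ε hε
      by_contra hcon
      push_neg at hcon
      have hapos : 0 < a (ε / 2) := by
        have := haSM (Set.self_mem_Ici) (Set.mem_Ici.2 (by linarith : (0:ℝ) ≤ ε / 2))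
          (by linarith)
        rwa [ha0] at this
      set c : ℝ := min (ε / 2) (a (ε / 2)) with hc
      have hcpos : 0 < c := lt_min (by linarith) hapos
      have hdecr : ∀ k, T^[k+1] v ≤ T^[k] v - c := by
        intro k
        have h1 := hTcontr (T^[k] v) (hnn' k)
        have h2 : ε ≤ T^[k] v := (hcon k).le
        have h3 : c ≤ min (T^[k] v / 2) (a (T^[k] v / 2)) :=
          le_min ((min_le_left _ _).trans (by linarith))
            ((min_le_right _ _).trans (hamono _ _ (by linarith) (by linarith)))
        rw [Function.iterate_succ_apply']
        linarith
      have hlin : ∀ k : ℕ, T^[k] v ≤ v - k * c := by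
        intro k
        induction k with
        | zero => simp
        | succ k ih =>
          have := hdecr k
          push_cast
          linarith
      obtain ⟨N, hN⟩ := exists_nat_gt ((v - ε) / c)
      have h5 := hlin N
      have h6 := hcon N
      have h7 : v - ε < (N:ℝ) * c := by
        rw [div_lt_iff₀ hcpos] at hN
        linarith
      linarith
    refine tendsto_order.2 ⟨?_, ?_⟩
    · intro b hb
      exact Filter.Eventually.of_forall fun k => hb.trans_le (hnn' k)
    · intro b hb
      obtain ⟨N, hN⟩ := hsmall (b / 2) (by linarith)
      rw [Filter.eventually_atTop]
      exact ⟨N, fun k hk => lt_of_le_of_lt ((hanti hk).trans hN) (by linarith)⟩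
  -- the gain bound B
  set B : ℝ → ℝ := fun x => ψa (σ x) + σ x with hB
  have hBnn : ∀ x, 0 ≤ x → 0 ≤ B x := fun x hx =>
    add_nonneg (hψar _ (hσnn x hx)).1 (hσnn x hx)
  have hBmono : ∀ x y, 0 ≤ x → x ≤ y → B x ≤ B y := by
    intro x y hx hxy
    have h1 : σ x ≤ σ y :=
      hσm.monotoneOn (Set.mem_Ici.2 hx) (Set.mem_Ici.2 (hx.trans hxy)) hxy
    exact add_le_add (hψam.monotone h1) h1
  refine ⟨fun r k => ψ1 (T^[k] (α2 r)) + r * (2⁻¹:ℝ)^k, fun s => ψ1 (B s), ?_, ?_, ?_⟩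
  · -- β is class KL
    refine ⟨?_, ?_, ?_⟩
    · intro k
      refine ⟨?_, ?_, ?_, ?_⟩
      · refine ContinuousOn.add ?_ ((continuous_id.mul continuous_const).continuousOn)
        exact (hψ1c.comp (hTcont.iterate k)).comp_continuousOn hα2c
      · intro x hx y hy hxy
        have h1 : α2 x ≤ α2 y := hα2m.monotoneOn hx hy hxy.le
        have h2 : T^[k] (α2 x) ≤ T^[k] (α2 y) := hTmono.iterate k h1
        have h3 : ψ1 (T^[k] (α2 x)) ≤ ψ1 (T^[k] (α2 y)) := hψ1m.monotone h2
        have h4 : x * (2⁻¹:ℝ)^k < y * (2⁻¹:ℝ)^k := by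
          have hp : (0:ℝ) < (2⁻¹:ℝ)^k := by positivity
          exact mul_lt_mul_of_pos_right hxy hp
        exact add_lt_add_of_le_of_lt h3 h4
      · simp [hα20, hTfix k, hψ10]
      · intro t ht
        have h1 : 0 ≤ T^[k] (α2 t) := hTiternn _ (hα2nn t ht) k
        have h2 := (hψ1r _ h1).1
        have h3 : 0 ≤ t * (2⁻¹:ℝ)^k := by positivity
        exact add_nonneg h2 h3
    · intro r hr
      refine antitone_nat_of_succ_le fun k => ?_
      have h1 : T^[k+1] (α2 r) ≤ T^[k] (α2 r) := hTiterle _ (hα2nn r hr) k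
      have h2 := hψ1m.monotone h1
      have h3 : r * (2⁻¹:ℝ)^(k+1) ≤ r * (2⁻¹:ℝ)^k := by
        refine mul_le_mul_of_nonneg_left ?_ hr
        exact pow_le_pow_of_le_one (by norm_num) (by norm_num) (Nat.le_succ k)
      exact add_le_add h2 h3
    · intro r hr
      have h1 : Filter.Tendsto (fun k => ψ1 (T^[k] (α2 r))) Filter.atTop (nhds 0) := by
        have h2 := (hψ1c.tendsto 0).comp (hTtend (α2 r) (hα2nn r hr))
        rwa [hψ10] at h2
      have h2 : Filter.Tendsto (fun k => r * (2⁻¹:ℝ)^k) Filter.atTop (nhds 0) := by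
        have h3 := tendsto_pow_atTop_nhds_zero_of_lt_one
          (by norm_num : (0:ℝ) ≤ 2⁻¹) (by norm_num : (2⁻¹:ℝ) < 1)
        simpa using h3.const_mul r
      simpa using h1.add h2
  · -- γ is class K
    refine ⟨?_, ?_, ?_, ?_⟩
    · exact hψ1c.comp_continuousOn ((hψac.comp_continuousOn hσc).add hσc)
    · intro x hx y hy hxy
      refine hψ1m ?_
      have h1 : σ x < σ y := hσm hx hy hxy
      exact add_lt_add (hψam h1) h1
    · simp [hB, hσ0, hψa0, hψ10]
    · intro t ht
      exact (hψ1r _ (hBnn t ht)).1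
  · -- main trajectory bound
    intro ξ ω hstep hωin hx0
    have hXk : ∀ k, ξ k ∈ X := by
      intro k
      induction k with
      | zero => exact hx0
      | succ k ih => rw [hstep k]; exact hXinv _ ih _ (hωin k)
    have hVk : ∀ k, 0 ≤ V (ξ k) := fun k => hVnn _ (hXΞ (hXk k))
    set r := ‖G2 (ξ 0)‖ with hr
    have hrnn : 0 ≤ r := norm_nonneg _
    set W : ℕ → ℝ := fun k =>
      (Finset.range (k+1)).sup' Finset.nonempty_range_add_one fun i => ‖ω i‖ with hWdef
    have hWnn : ∀ k, 0 ≤ W k := by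
      intro k
      simp only [hWdef]
      exact (norm_nonneg (ω 0)).trans
        (Finset.le_sup' (fun i => ‖ω i‖) (Finset.mem_range.2 (Nat.succ_pos k)))
    have hWmono : ∀ k, W k ≤ W (k+1) := by
      intro k
      simp only [hWdef]
      exact Finset.sup'_mono _ (Finset.range_subset_range.2 (by omega)) _
    have hωW : ∀ k, ‖ω k‖ ≤ W k := by
      intro k
      simp only [hWdef]
      exact Finset.le_sup' (fun i => ‖ω i‖) (Finset.mem_range.2 (by omega))
    have key : ∀ k, V (ξ k) ≤ max (T^[k] (α2 r)) (B (W k)) := by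
      intro k
      induction k with
      | zero =>
        refine le_max_of_le_left ?_
        have h0 := hup _ hx0
        rw [← hr] at h0
        simpa using h0
      | succ k ih =>
        have hdk := hdec (ξ k) (hXk k) (ω k) (hωin k)
        rw [← hstep k] at hdk
        have hVnnk := hVk k
        rcases le_or_gt (σ ‖ω k‖) (a (V (ξ k))) with hcA | hcB
        · have h2a : a (V (ξ k)) ≤ α3 (V (ξ k)) / 2 := hale _
          have h1 : V (ξ (k+1)) ≤ V (ξ k) - a (V (ξ k)) := by linarith
          have h2 : V (ξ (k+1)) ≤ T (V (ξ k)) := h1.trans (hTge _ hVnnk)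
          have h3 : T (V (ξ k)) ≤ max (T (T^[k] (α2 r))) (T (B (W k))) := by
            rw [← hTmono.map_max]
            exact hTmono ih
          have h4 : T (B (W k)) ≤ B (W (k+1)) :=
            (hTle' _ (hBnn _ (hWnn k))).trans (hBmono _ _ (hWnn k) (hWmono k))
          refine (h2.trans h3).trans (max_le_max ?_ h4)
          rw [Function.iterate_succ_apply']
        · have hψV : V (ξ k) < ψa (σ ‖ω k‖) := by
            calc V (ξ k) = ψa (a (V (ξ k))) := (hψal _ hVnnk).symm
              _ < ψa (σ ‖ω k‖) := hψam hcB
          have h6 : V (ξ (k+1)) ≤ ψa (σ ‖ω k‖) + σ ‖ω k‖ := by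
            have := hα3nn _ hVnnk
            linarith
          refine le_max_of_le_right ?_
          have hω1 : ‖ω k‖ ≤ W (k+1) := (hωW k).trans (hWmono k)
          have hσle : σ ‖ω k‖ ≤ σ (W (k+1)) :=
            hσm.monotoneOn (Set.mem_Ici.2 (norm_nonneg _)) (Set.mem_Ici.2 (hWnn _)) hω1
          exact h6.trans (add_le_add (hψam.monotone hσle) hσle)
    intro k
    show ‖G1 (ξ k)‖ ≤ (ψ1 (T^[k] (α2 r)) + r * (2⁻¹:ℝ)^k) + ψ1 (B (W k))
    have h7 : α1 ‖G1 (ξ k)‖ ≤ max (T^[k] (α2 r)) (B (W k)) := (hlow _ (hXk k)).trans (key k)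
    have h8 : ‖G1 (ξ k)‖ ≤ ψ1 (max (T^[k] (α2 r)) (B (W k))) := by
      calc ‖G1 (ξ k)‖ = ψ1 (α1 ‖G1 (ξ k)‖) := (hψ1l _ (norm_nonneg _)).symm
        _ ≤ _ := hψ1m.monotone h7
    rw [hψ1m.monotone.map_max] at h8
    have h9 : 0 ≤ ψ1 (T^[k] (α2 r)) := (hψ1r _ (hTiternn _ (hα2nn _ hrnn) k)).1
    have h10 : 0 ≤ ψ1 (B (W k)) := (hψ1r _ (hBnn _ (hWnn k))).1
    have h11 : 0 ≤ r * (2⁻¹:ℝ)^k := by positivity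
    calc ‖G1 (ξ k)‖ ≤ max (ψ1 (T^[k] (α2 r))) (ψ1 (B (W k))) := h8
      _ ≤ ψ1 (T^[k] (α2 r)) + ψ1 (B (W k)) :=
        max_le (le_add_of_nonneg_right h10) (le_add_of_nonneg_left h9)
      _ ≤ _ := by linarith
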